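/- Within a single timestamp of PSGraph's information perturbation, releasing both (a) the vector of intra-community degrees perturbed with Laplace noise at budget ε_i (sensitivity 2) and (b) the pair consisting of external degrees at budget ε_{i1} and inter-community edge counts at budget ε_{i2} = ε_i − ε_{i1}, satisfies ε_i-edge DP overall, because intra-community edges and inter-community edges are disjoint edge sets (parallel composition) while (a)'s two parts access overlapping inter-community edges (sequential composition). -/
import Mathlib


/-- `ε`-differential privacy for a randomized algorithm `A : D → PMF Ω` with respect to a
neighboring relation `N`. -/
def IsDP {D Ω : Type*} (N : D → D → Prop) (A : D → PMF Ω) (ε : ℝ) : Prop :=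
  ∀ d d', N d d' → ∀ O : Set Ω,
    (A d).toOuterMeasure O ≤ ENNReal.ofReal (Real.exp ε) * (A d').toOuterMeasure O

open ENNReal in
lemma dom_of_isdp {D Ω : Type*} {N : D → D → Prop} {A : D → PMF Ω} {ε : ℝ}
    (h : IsDP N A ε) {d d' : D} (hN : N d d') (x : Ω) :
    A d x ≤ ENNReal.ofReal (Real.exp ε) * A d' x := by
  have := h d d' hN {x}
  simpa [PMF.toOuterMeasure_apply_singleton] using this

lemma dom_bind {α β : Type*} {p p' : PMF α} {f f' : α → PMF β} {k k' : ENNReal}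
    (hp : ∀ a, p a ≤ k * p' a) (hf : ∀ a x, f a x ≤ k' * f' a x) (x : β) :
    p.bind f x ≤ (k * k') * (p'.bind f') x := by
  simp only [PMF.bind_apply]
  rw [← ENNReal.tsum_mul_left]
  refine ENNReal.tsum_le_tsum fun a => ?_
  calc p a * f a x ≤ (k * p' a) * (k' * f' a x) := mul_le_mul' (hp a) (hf a x)
    _ = k * k' * (p' a * f' a x) := by ring

lemma dom_map {α β : Type*} {p p' : PMF α} {k : ENNReal} (hp : ∀ a, p a ≤ k * p' a)
    (g : α → β) (x : β) : p.map g x ≤ k * (p'.map g) x := by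
  simp only [PMF.map_apply]
  rw [← ENNReal.tsum_mul_left]
  refine ENNReal.tsum_le_tsum fun a => ?_
  split_ifs
  · exact hp a
  · simp

lemma isdp_of_dom {D Ω : Type*} {N : D → D → Prop} {A : D → PMF Ω} {ε : ℝ}
    (h : ∀ d d', N d d' → ∀ x, A d x ≤ ENNReal.ofReal (Real.exp ε) * A d' x) :
    IsDP N A ε := by
  intro d d' hN O
  rw [PMF.toOuterMeasure_apply, PMF.toOuterMeasure_apply, ← ENNReal.tsum_mul_left]
  refine ENNReal.tsum_le_tsum fun x => ?_
  by_cases hx : x ∈ O <;> simp [Set.indicator, hx, h d d' hN x]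

/-- PSGraph's information perturbation at one timestamp: releasing (a) the noisy
intra-community degrees (budget `ε_i`, unaffected by inter-community edge changes),
and (b) the noisy external degrees (budget `ε_{i1}`) and inter-community edge counts
(budget `ε_{i2} = ε_i − ε_{i1}`), both unaffected by intra-community edge changes,
satisfies `ε_i`-edge DP overall, by parallel composition across the disjoint intra/inter
edge sets and sequential composition within the overlapping inter-community parts. -/
theorem psgraph_info_perturbation_dp {D ΩA ΩB ΩC : Type*}
    (Nintra Ninter : D → D → Prop)
    (A : D → PMF ΩA) (B : D → PMF ΩB) (C : D → PMF ΩC)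
    (εi εi1 : ℝ) (h1 : 0 ≤ εi1) (h2 : εi1 ≤ εi)
    (hA_dp : IsDP Nintra A εi) (hA_inv : ∀ d d', Ninter d d' → A d = A d')
    (hB_dp : IsDP Ninter B εi1) (hB_inv : ∀ d d', Nintra d d' → B d = B d')
    (hC_dp : IsDP Ninter C (εi - εi1)) (hC_inv : ∀ d d', Nintra d d' → C d = C d') :
    IsDP (fun d d' => Nintra d d' ∨ Ninter d d')
      (fun d => (A d).bind fun a => (B d).bind fun b => (C d).map fun c => (a, b, c))
      εi := by
  apply isdp_of_dom
  rintro d d' (hN | hN) x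
  · -- intra case: A is DP, B and C invariant
    have hkey : ((A d).bind fun a => (B d).bind fun b => (C d).map fun c => (a, b, c)) x
        ≤ (ENNReal.ofReal (Real.exp εi) * 1) *
          ((A d').bind fun a => (B d').bind fun b => (C d').map fun c => (a, b, c)) x := by
      refine dom_bind (dom_of_isdp hA_dp hN) (fun a y => ?_) x
      rw [hB_inv d d' hN, hC_inv d d' hN, one_mul]
    simpa using hkey
  · -- inter case: A invariant, B and C compose sequentially
    have hkey : ((A d).bind fun a => (B d).bind fun b => (C d).map fun c => (a, b, c)) x
        ≤ (1 * (ENNReal.ofReal (Real.exp εi1) * ENNReal.ofReal (Real.exp (εi - εi1)))) *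
          ((A d').bind fun a => (B d').bind fun b => (C d').map fun c => (a, b, c)) x := by
      refine dom_bind (fun a => by rw [hA_inv d d' hN, one_mul]) (fun a y => ?_) x
      exact dom_bind (dom_of_isdp hB_dp hN)
        (fun b z => dom_map (dom_of_isdp hC_dp hN) _ z) y
    have : ENNReal.ofReal (Real.exp εi1) * ENNReal.ofReal (Real.exp (εi - εi1))
        = ENNReal.ofReal (Real.exp εi) := by
      rw [← ENNReal.ofReal_mul (Real.exp_nonneg _), ← Real.exp_add]
      ring_nf
    rw [this, one_mul] at hkey
    exact hkey
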